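/- Let u ∈ Z and let (x^n) be a sequence in Y ∪ Z. Then x^n → u in the path space topology if and only if for every index i, eventually (in n) the path x^n has length at least i and its i-th edge equals u_i (in particular the lengths l(x^n) tend to infinity). -/

import Mathlib

namespace GraphCstar

/-- A directed graph: vertices, edges, source and range maps. -/
structure Graph where
  V : Type
  Ed : Type
  src : Ed → V
  rng : Ed → V

variable (G : Graph)

/-- Validity of a list of edges as a path starting at vertex `v`. -/
def Valid : G.V → List G.Ed → Prop
  | _, [] => True
  | v, e :: l => G.src e = v ∧ Valid (G.rng e) l

/-- Terminal vertex of a list of edges starting at `v`. -/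
def rngTo : G.V → List G.Ed → G.V
  | v, [] => v
  | _, e :: l => rngTo (G.rng e) l

theorem valid_append (l₁ l₂ : List G.Ed) (v : G.V) :
    Valid G v (l₁ ++ l₂) ↔ Valid G v l₁ ∧ Valid G (rngTo G v l₁) l₂ := by
  induction l₁ generalizing v with
  | nil => simp [Valid, rngTo]
  | cons e l ih => simp [Valid, rngTo, ih, and_assoc]

theorem rngTo_append (l₁ l₂ : List G.Ed) (v : G.V) :
    rngTo G v (l₁ ++ l₂) = rngTo G (rngTo G v l₁) l₂ := by
  induction l₁ generalizing v with
  | nil => rfl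
  | cons e l ih => simp [rngTo, ih]

theorem valid_drop {v : G.V} {l : List G.Ed} (n : ℕ) (h : Valid G v l) :
    Valid G (rngTo G v (l.take n)) (l.drop n) := by
  have h' : Valid G v (l.take n ++ l.drop n) := by
    rw [List.take_append_drop]; exact h
  exact ((valid_append G _ _ _).mp h').2

/-- A finite path in the graph `G`; vertices are the paths of length `0`. -/
structure FinPath where
  start : G.V
  edges : List G.Ed
  valid : Valid G start edges

namespace FinPath

variable {G}

/-- The terminal vertex (range) of a finite path. -/
def rngF (α : FinPath G) : G.V := rngTo G α.start α.edges

/-- The length of a finite path. -/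
def len (α : FinPath G) : ℕ := α.edges.length

/-- The finite path of length `0` at the vertex `v`. -/
def vp (v : G.V) : FinPath G := ⟨v, [], trivial⟩

/-- The finite path consisting of the single edge `e`. -/
def ep (e : G.Ed) : FinPath G := ⟨G.src e, [e], ⟨rfl, trivial⟩⟩

/-- Concatenation of finite paths. -/
def concat (α β : FinPath G) (h : β.start = α.rngF) : FinPath G :=
  ⟨α.start, α.edges ++ β.edges,
    (valid_append G _ _ _).mpr
      ⟨α.valid, by
        show Valid G α.rngF β.edges
        rw [← h]; exact β.valid⟩⟩

theorem rngF_concat (α β : FinPath G) (h : β.start = α.rngF) :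
    (α.concat β h).rngF = β.rngF := by
  show rngTo G α.start (α.edges ++ β.edges) = _
  rw [rngTo_append]
  show rngTo G α.rngF β.edges = _
  rw [← h]; rfl

end FinPath

/-- `α` is an initial segment of `β`. -/
def IsPref (α β : FinPath G) : Prop := α.start = β.start ∧ α.edges <+: β.edges

/-- The "remainder" path: if `α` is an initial segment of `β`, the path `μ` with
`β = αμ` (for other inputs the value is junk). -/
def diff (α β : FinPath G) : FinPath G :=
  ⟨rngTo G β.start (β.edges.take α.edges.length),
    β.edges.drop α.edges.length, valid_drop G _ β.valid⟩

open Classical in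
/-- Totalized concatenation of finite paths (junk value when endpoints do not match). -/
noncomputable def catP (α β : FinPath G) : FinPath G :=
  if h : β.start = α.rngF then α.concat β h else α

open Classical in
/-- The product on `T = {(α,β) ∈ Y × Y : r(α) = r(β)} ∪ {z}`, with `z` encoded as `none`. -/
noncomputable def mulT :
    Option (FinPath G × FinPath G) → Option (FinPath G × FinPath G) →
      Option (FinPath G × FinPath G)
  | none, _ => none
  | _, none => none
  | some (α₁, β₁), some (α₂, β₂) =>
    if IsPref G β₁ α₂ then some (catP G α₁ (diff G β₁ α₂), β₂)
    else if IsPref G α₂ β₁ then some (α₁, catP G β₂ (diff G α₂ β₁))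
    else none

/-- The involution on `T`. -/
def starT :
    Option (FinPath G × FinPath G) → Option (FinPath G × FinPath G)
  | none => none
  | some (α, β) => some (β, α)

/-- The subset of `Option (FinPath G × FinPath G)` corresponding to
`T = {(α,β) : r(α) = r(β)} ∪ {z}`. -/
def TsetT : Set (Option (FinPath G × FinPath G)) :=
  {t | ∀ α β : FinPath G, t = some (α, β) → α.rngF = β.rngF}

/-- An infinite path in the graph `G`. -/
structure InfPath where
  seq : ℕ → G.Ed
  valid : ∀ i, G.src (seq (i + 1)) = G.rng (seq i)

/-- The initial vertex of an infinite path. -/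
def InfPath.start {G : Graph} (z : InfPath G) : G.V := G.src (z.seq 0)

/-- Prepending an edge to an infinite path. -/
def consInf (e : G.Ed) (z : InfPath G) (h : z.start = G.rng e) : InfPath G where
  seq := fun n =>
    match n with
    | 0 => e
    | m + 1 => z.seq m
  valid := fun i =>
    match i with
    | 0 => h
    | m + 1 => z.valid m

/-- Prepending a finite edge list to an infinite path (with the starting vertex recorded). -/
def appendInfAux :
    (l : List G.Ed) → (v : G.V) → Valid G v l → (z : InfPath G) →
      z.start = rngTo G v l → {w : InfPath G // w.start = v}
  | [], _, _, z, h => ⟨z, h⟩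
  | e :: l, v, hv, z, h =>
    let w := appendInfAux l (G.rng e) hv.2 z h
    ⟨consInf G e w.1 w.2, hv.1⟩

/-- Concatenation of a finite path with an infinite path. -/
def FinPath.concatInf {G : Graph} (α : FinPath G) (z : InfPath G)
    (h : z.start = α.rngF) : InfPath G :=
  (appendInfAux G α.edges α.start α.valid z h).1

/-- The path space `Y ∪ Z` of all finite and infinite paths. -/
def PathSp := FinPath G ⊕ InfPath G

/-- The initial vertex of a (finite or infinite) path. -/
def startOf : PathSp G → G.V
  | .inl α => α.start
  | .inr z => z.start

/-- The length of a path, in `ℕ∞`. -/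
def lenOf : PathSp G → ℕ∞
  | .inl α => (α.edges.length : ℕ∞)
  | .inr _ => ⊤

/-- The `i`-th edge (0-indexed) of a path, if it exists. -/
def nthEdge : PathSp G → ℕ → Option G.Ed
  | .inl α, i => α.edges[i]?
  | .inr z, i => some (z.seq i)

/-- `x = αγ` for some (finite or infinite, possibly length `0`) path `γ`;
that is, `α` is an initial segment of `x`, i.e. `x ∈ D_α`. -/
def Ext (α : FinPath G) (x : PathSp G) : Prop :=
  (∃ (β : FinPath G) (h : β.start = α.rngF), x = .inl (α.concat β h)) ∨
  (∃ (w : InfPath G) (h : w.start = α.rngF), x = .inr (α.concatInf w h))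

/-- The basic set `D_α ⊆ Y ∪ Z`. -/
def Dset (α : FinPath G) : Set (PathSp G) := {x | Ext G α x}

/-- The topology on the path space, generated by the sets `D_α` and their complements. -/
def pathTop : TopologicalSpace (PathSp G) :=
  .generateFrom (Set.range (Dset G) ∪ Set.range fun α => (Dset G α)ᶜ)

/-- The vertex `v` emits infinitely many edges. -/
def Vinf (v : G.V) : Prop := {e | G.src e = v}.Infinite

/-- Membership in `X = Y_∞ ∪ Z`. -/
def memX : PathSp G → Prop
  | .inl α => Vinf G α.rngF
  | .inr _ => True

/-- The set `X = Y_∞ ∪ Z`. -/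
def Xset : Set (PathSp G) := {x | memX G x}

/-- Tail equivalence of paths: `x = αγ` and `y = βγ` for finite paths `α, β`
and a common (finite or infinite) path `γ`. -/
def TailEq (x y : PathSp G) : Prop :=
  (∃ (α β γ : FinPath G) (h₁ : γ.start = α.rngF) (h₂ : γ.start = β.rngF),
      x = .inl (α.concat γ h₁) ∧ y = .inl (β.concat γ h₂)) ∨
  (∃ (α β : FinPath G) (w : InfPath G) (h₁ : w.start = α.rngF)
      (h₂ : w.start = β.rngF),
      x = .inr (α.concatInf w h₁) ∧ y = .inr (β.concatInf w h₂))

/-- A subset of the path space is invariant (a union of tail-equivalence classes). -/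
def InvariantS (F : Set (PathSp G)) : Prop :=
  ∀ x ∈ F, ∀ y, TailEq G x y → y ∈ F

/-- Membership `(x, k, y) ∈ G` for the path groupoid: `x = αγ`, `y = βγ` and
`k = l(α) - l(β)`. -/
def InG (x : PathSp G) (k : ℤ) (y : PathSp G) : Prop :=
  (∃ (α β γ : FinPath G) (h₁ : γ.start = α.rngF) (h₂ : γ.start = β.rngF),
      x = .inl (α.concat γ h₁) ∧ y = .inl (β.concat γ h₂) ∧
        k = (α.len : ℤ) - (β.len : ℤ)) ∨
  (∃ (α β : FinPath G) (w : InfPath G) (h₁ : w.start = α.rngF)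
      (h₂ : w.start = β.rngF),
      x = .inr (α.concatInf w h₁) ∧ y = .inr (β.concatInf w h₂) ∧
        k = (α.len : ℤ) - (β.len : ℤ))

/-- There is a finite path from `u` to `w`. -/
def Reach (u w : G.V) : Prop := ∃ β : FinPath G, β.start = u ∧ β.rngF = w

/-- A loop based at the vertex `v`. -/
def LoopAt (v : G.V) (α : FinPath G) : Prop :=
  α.edges ≠ [] ∧ α.start = v ∧ α.rngF = v ∧
    ∀ i e, i + 1 < α.edges.length → α.edges[i]? = some e → G.rng e ≠ v

/-- Condition (K): no vertex has exactly one loop based at it. -/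
def CondK : Prop := ¬ ∃ v : G.V, ∃! α : FinPath G, LoopAt G v α

/-- A point of the path space has trivial isotropy if whenever `x = αγ = βγ`
then `l(α) = l(β)`. -/
def TrivIso (x : PathSp G) : Prop :=
  ∀ α β : FinPath G,
    ((∃ (γ : FinPath G) (h₁ : γ.start = α.rngF) (h₂ : γ.start = β.rngF),
        x = .inl (α.concat γ h₁) ∧ x = .inl (β.concat γ h₂)) ∨
     (∃ (w : InfPath G) (h₁ : w.start = α.rngF) (h₂ : w.start = β.rngF),
        x = .inr (α.concatInf w h₁) ∧ x = .inr (β.concatInf w h₂))) →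
    α.len = β.len


section Helpers

theorem FinPath.ext' {G : Graph} {α β : FinPath G} (h1 : α.start = β.start)
    (h2 : α.edges = β.edges) : α = β := by
  cases α; cases β; simp_all

theorem InfPath.ext' {G : Graph} {z w : InfPath G} (h : ∀ i, z.seq i = w.seq i) : z = w := by
  cases z; cases w; simp only [InfPath.mk.injEq]; exact funext h

theorem appendInfAux_seq (G : Graph) :
    ∀ (l : List G.Ed) (v : G.V) (hv : Valid G v l) (z : InfPath G)
      (h : z.start = rngTo G v l) (i : ℕ),
      (appendInfAux G l v hv z h).1.seq i =
        if hi : i < l.length then l[i] else z.seq (i - l.length) := by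
  intro l
  induction l with
  | nil => intro v hv z h i; simp [appendInfAux]
  | cons e l ih =>
    intro v hv z h i
    cases i with
    | zero => simp [appendInfAux, consInf]
    | succ m =>
      have := ih (G.rng e) hv.2 z h m
      simp only [appendInfAux, consInf, List.length_cons]
      rw [this]
      by_cases hm : m < l.length
      · simp [hm, Nat.succ_lt_succ hm]
      · have : ¬ m + 1 < l.length + 1 := by omega
        simp only [hm, this, dite_false]
        congr 1
        omega

theorem appendInfAux_start (G : Graph) (l : List G.Ed) (v : G.V) (hv : Valid G v l)
    (z : InfPath G) (h : z.start = rngTo G v l) :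
    (appendInfAux G l v hv z h).1.start = v :=
  (appendInfAux G l v hv z h).2

/-- The shift of an infinite path by `k`. -/
def shiftInf (G : Graph) (z : InfPath G) (k : ℕ) : InfPath G :=
  ⟨fun i => z.seq (i + k), fun i => by
    show G.src (z.seq (i + 1 + k)) = G.rng (z.seq (i + k))
    rw [show i + 1 + k = i + k + 1 by omega]
    exact z.valid (i + k)⟩

theorem rngTo_eq_src (G : Graph) (z : InfPath G) :
    ∀ (l : List G.Ed) (m : ℕ) (v : G.V), v = G.src (z.seq m) →
      (∀ i (h : i < l.length), l[i] = z.seq (m + i)) →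
      rngTo G v l = G.src (z.seq (m + l.length)) := by
  intro l
  induction l with
  | nil => intro m v hv _; simpa [rngTo] using hv
  | cons e l ih =>
    intro m v hv hl
    have he : e = z.seq m := by exact hl 0 (by simp)
    have hr : G.rng e = G.src (z.seq (m + 1)) := by rw [he]; exact (z.valid m).symm
    show rngTo G (G.rng e) l = _
    rw [show m + (e :: l).length = (m + 1) + l.length by simp; omega]
    exact ih (m + 1) _ hr (fun i hi => by
      have := hl (i + 1) (by simpa using Nat.succ_lt_succ hi)
      simpa [Nat.add_assoc, Nat.add_comm 1 i] using this)

theorem startOf_eq_src {G : Graph} {x : PathSp G} {e : G.Ed}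
    (h : nthEdge G x 0 = some e) : startOf G x = G.src e := by
  cases x with
  | inl β =>
    cases hβ : β.edges with
    | nil => simp [nthEdge, hβ] at h
    | cons e' t =>
      simp only [nthEdge, hβ, List.getElem?_cons_zero, Option.some.injEq] at h
      have := β.valid
      rw [hβ] at this
      subst h
      exact this.1.symm ▸ rfl
  | inr z =>
    simp only [nthEdge, Option.some.injEq] at h
    subst h
    rfl

/-- Characterization of `Ext` in terms of start vertex and edges. -/
theorem ext_iff {G : Graph} (α : FinPath G) (x : PathSp G) :
    Ext G α x ↔ startOf G x = α.start ∧
      ∀ i, i < α.len → nthEdge G x i = α.edges[i]? := by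
  constructor
  · rintro (⟨β, hβ, rfl⟩ | ⟨w, hw, rfl⟩)
    · refine ⟨rfl, fun i hi => ?_⟩
      show (α.edges ++ β.edges)[i]? = α.edges[i]?
      have hi' : i < α.edges.length := hi
      rw [List.getElem?_append, if_pos hi']
    · constructor
      · exact appendInfAux_start G α.edges α.start α.valid w hw
      · intro i hi
        show some ((appendInfAux G α.edges α.start α.valid w hw).1.seq i) = _
        rw [appendInfAux_seq G α.edges α.start α.valid w hw i]
        have hi' : i < α.edges.length := hi
        rw [dif_pos hi']
        exact (List.getElem?_eq_getElem hi').symm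
  · rintro ⟨hst, hed⟩
    cases x with
    | inl β =>
      -- lengths
      have hlen : α.len ≤ β.len := by
        by_contra hlt
        push_neg at hlt
        have h1 := hed β.len hlt
        have h2 : β.edges[β.len]? = none := by
          apply List.getElem?_eq_none
          exact le_refl _
        rw [show nthEdge G (Sum.inl β) β.len = β.edges[β.len]? from rfl, h2,
          List.getElem?_eq_getElem hlt] at h1
        cases h1
      have hlen' : α.edges.length ≤ β.edges.length := hlen
      have htake : β.edges.take α.len = α.edges := by
        apply List.ext_getElem
        · show (List.take α.edges.length β.edges).length = α.edges.length
          rw [List.length_take]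
          omega
        · intro i h1 h2
          rw [List.getElem_take]
          have := hed i h2
          rw [show nthEdge G (Sum.inl β) i = β.edges[i]? from rfl,
            List.getElem?_eq_getElem (lt_of_lt_of_le h2 hlen),
            List.getElem?_eq_getElem h2] at this
          exact Option.some_injective _ this
      left
      have hstart : β.start = α.start := hst
      refine ⟨⟨rngTo G β.start (β.edges.take α.edges.length),
        β.edges.drop α.edges.length, valid_drop G _ β.valid⟩, ?_, ?_⟩
      · show rngTo G β.start (β.edges.take α.len) = α.rngF
        rw [htake, hstart]
        rfl
      · apply congrArg
        apply FinPath.ext'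
        · exact hstart
        · show β.edges = α.edges ++ β.edges.drop α.edges.length
          conv_lhs => rw [← List.take_append_drop α.edges.length β.edges]
          rw [show α.edges.length = α.len from rfl, htake]
    | inr z =>
      right
      have hzed : ∀ i (hi : i < α.edges.length), α.edges[i] = z.seq i := by
        intro i hi
        have := hed i hi
        rw [show nthEdge G (Sum.inr z) i = some (z.seq i) from rfl,
          List.getElem?_eq_getElem hi] at this
        exact (Option.some_injective _ this).symm
      have hstart : z.start = α.start := hst
      have hw : (shiftInf G z α.len).start = α.rngF := by
        show G.src ((shiftInf G z α.len).seq 0) = rngTo G α.start α.edges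
        have : rngTo G α.start α.edges = G.src (z.seq (0 + α.edges.length)) := by
          apply rngTo_eq_src G z α.edges 0 α.start
          · rw [← hstart]; rfl
          · intro i hi; simpa using hzed i hi
        rw [this]
        rfl
      refine ⟨shiftInf G z α.len, hw, ?_⟩
      apply congrArg
      apply InfPath.ext'
      intro i
      show z.seq i = (appendInfAux G α.edges α.start α.valid _ hw).1.seq i
      rw [appendInfAux_seq G α.edges α.start α.valid _ hw i]
      by_cases hi : i < α.edges.length
      · simp only [hi, dite_true]
        exact (hzed i hi).symm
      · simp only [hi, dite_false]
        show z.seq i = z.seq (i - α.edges.length + α.len)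
        congr 1
        show i = i - α.edges.length + α.edges.length
        omega

theorem valid_ofFn (G : Graph) (z : InfPath G) :
    ∀ (k m : ℕ), Valid G (G.src (z.seq m)) (List.ofFn fun j : Fin k => z.seq (m + j)) := by
  intro k
  induction k with
  | zero => intro m; exact trivial
  | succ k ih =>
    intro m
    rw [List.ofFn_succ]
    refine ⟨by simp, ?_⟩
    have h1 : G.rng (z.seq (m + ↑(0 : Fin (k+1)))) = G.src (z.seq (m + 1)) := by
      simpa using (z.valid m).symm
    rw [h1]
    have h2 : (List.ofFn fun j : Fin k => z.seq (m + ↑j.succ)) =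
        List.ofFn fun j : Fin k => z.seq ((m + 1) + ↑j) := by
      apply congrArg
      funext j
      congr 1
      simp [Fin.val_succ]
      omega
    rw [h2]
    exact ih (m + 1)

/-- The prefix of an infinite path of length `k`. -/
def prefPath (G : Graph) (u : InfPath G) (k : ℕ) : FinPath G :=
  ⟨u.start, List.ofFn fun j : Fin k => u.seq j, by
    have := valid_ofFn G u k 0
    simpa [InfPath.start] using this⟩

theorem prefPath_len (G : Graph) (u : InfPath G) (k : ℕ) : (prefPath G u k).len = k := by
  simp [prefPath, FinPath.len]

theorem prefPath_getElem? (G : Graph) (u : InfPath G) (k i : ℕ) (hi : i < k) :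
    (prefPath G u k).edges[i]? = some (u.seq i) := by
  simp [prefPath, List.getElem?_ofFn, List.ofFnNthVal, hi]

theorem mem_Dset_prefPath (G : Graph) (u : InfPath G) (k : ℕ) :
    (Sum.inr u : PathSp G) ∈ Dset G (prefPath G u k) := by
  show Ext G (prefPath G u k) (Sum.inr u)
  refine (ext_iff _ _).mpr ?_
  refine ⟨rfl, fun i hi => ?_⟩
  rw [prefPath_getElem? G u k i (by simpa [prefPath_len] using hi)]
  rfl

end Helpers

/-- A sequence `(xⁿ)` in `Y ∪ Z` converges to an infinite path `u ∈ Z`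
iff for every index `i`, eventually `xⁿ` has length at least `i + 1` and its `i`-th edge
(0-indexed) equals `u_i`; in particular the lengths of the `xⁿ` tend to infinity. -/
theorem tendsto_to_infinite_path_iff (G : Graph) [Countable G.V] [Countable G.Ed]
    (hns : ∀ v : G.V, ∃ e : G.Ed, G.src e = v)
    (u : InfPath G) (x : ℕ → PathSp G) :
    (Filter.Tendsto x Filter.atTop (@nhds (PathSp G) (pathTop G) (Sum.inr u)) ↔
      ∀ i : ℕ, ∀ᶠ n in Filter.atTop, nthEdge G (x n) i = some (u.seq i)) ∧
    (Filter.Tendsto x Filter.atTop (@nhds (PathSp G) (pathTop G) (Sum.inr u)) →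
      ∀ m : ℕ, ∀ᶠ n in Filter.atTop, (m : ℕ∞) ≤ lenOf G (x n)) := by
  have key : Filter.Tendsto x Filter.atTop (@nhds (PathSp G) (pathTop G) (Sum.inr u)) ↔
      ∀ i : ℕ, ∀ᶠ n in Filter.atTop, nthEdge G (x n) i = some (u.seq i) := by
    constructor
    · intro h i
      have hopen : @IsOpen (PathSp G) (pathTop G) (Dset G (prefPath G u (i + 1))) :=
        TopologicalSpace.isOpen_generateFrom_of_mem (Or.inl ⟨_, rfl⟩)
      have hmem := mem_Dset_prefPath G u (i + 1)
      have hnhds : Dset G (prefPath G u (i + 1)) ∈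
          @nhds (PathSp G) (pathTop G) (Sum.inr u) := by
        letI := pathTop G
        exact hopen.mem_nhds hmem
      have hev : ∀ᶠ n in Filter.atTop, x n ∈ Dset G (prefPath G u (i + 1)) := h hnhds
      filter_upwards [hev] with n hn
      have := ((ext_iff (prefPath G u (i + 1)) (x n)).mp hn).2 i
        (by rw [prefPath_len]; omega)
      rw [this, prefPath_getElem? G u (i + 1) i (by omega)]
    · intro H
      refine TopologicalSpace.tendsto_nhds_generateFrom_iff.mpr ?_
      rintro s (⟨α, rfl⟩ | ⟨α, rfl⟩) hmem
      · -- s = Dset α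
        obtain ⟨hst, hed⟩ := (ext_iff α (Sum.inr u)).mp hmem
        have hall : ∀ᶠ n in Filter.atTop,
            ∀ i ∈ Finset.range (α.len + 1), nthEdge G (x n) i = some (u.seq i) :=
          (Filter.eventually_all_finset _).mpr (fun i _ => H i)
        show ∀ᶠ n in Filter.atTop, x n ∈ Dset G α
        filter_upwards [hall] with n hn
        show Ext G α (x n)
        rw [ext_iff]
        constructor
        · have h0 := hn 0 (Finset.mem_range.mpr (by omega))
          rw [startOf_eq_src h0, ← hst]
          rfl
        · intro i hi
          have := hed i hi
          rw [show nthEdge G (Sum.inr u) i = some (u.seq i) from rfl] at this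
          rw [hn i (Finset.mem_range.mpr (by omega)), this]
      · -- s = (Dset α)ᶜ
        have hne : ¬ Ext G α (Sum.inr u) := hmem
        show ∀ᶠ n in Filter.atTop, x n ∈ (Dset G α)ᶜ
        by_cases hc : ∃ i, i < α.len ∧ α.edges[i]? ≠ some (u.seq i)
        · obtain ⟨i, hi, hne2⟩ := hc
          filter_upwards [H i] with n hn hmemD
          have hD := (ext_iff α (x n)).mp hmemD
          exact hne2 ((hD.2 i hi).symm.trans hn)
        · push_neg at hc
          have hsne : startOf G (Sum.inr u) ≠ α.start := by
            intro hcontra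
            apply hne
            refine (ext_iff _ _).mpr ?_
            refine ⟨hcontra, fun i hi => ?_⟩
            rw [show nthEdge G (Sum.inr u) i = some (u.seq i) from rfl,
              ← hc i hi]
          filter_upwards [H 0] with n hn hmemD
          have hD := (ext_iff α (x n)).mp hmemD
          have hsn := startOf_eq_src hn
          exact hsne (by
            rw [show startOf G (Sum.inr u) = G.src (u.seq 0) from rfl, ← hsn]
            exact hD.1)
  refine ⟨key, fun h m => ?_⟩
  rcases Nat.eq_zero_or_pos m with rfl | hm
  · exact Filter.Eventually.of_forall fun n => by simp
  · filter_upwards [key.mp h (m - 1)] with n hn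
    rcases hx : x n with β | z
    · rw [hx] at hn
      have hlt : m - 1 < β.edges.length := by
        by_contra hcon
        push_neg at hcon
        rw [show nthEdge G (Sum.inl β) (m - 1) = β.edges[m - 1]? from rfl,
          List.getElem?_eq_none hcon] at hn
        cases hn
      show (m : ℕ∞) ≤ (β.edges.length : ℕ∞)
      exact Nat.cast_le.mpr (by omega)
    · exact le_top

end GraphCstar
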